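/- Let f, g : ℝ → ℝ with f Q-concave piecewise distance-like and g distance-like (both in the sense of the model functions log cosh(x − a) + b). Then f − g is Q-concave and piecewise monotone; moreover, if f − g vanishes at two points i < j, then f − g ≥ 0 on [i, j] and f − g ≤ 0 on ℝ \ [i, j]. -/

import Mathlib

open scoped Classical

private lemma tanh_strictMono : StrictMono Real.tanh := by
  intro x y hxy
  rw [Real.tanh_eq_sinh_div_cosh, Real.tanh_eq_sinh_div_cosh,
    div_lt_div_iff₀ (Real.cosh_pos x) (Real.cosh_pos y)]
  have h : 0 < Real.sinh (y - x) := by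
    rw [← Real.sinh_zero]
    exact Real.sinh_lt_sinh.mpr (by linarith)
  rw [Real.sinh_sub] at h
  nlinarith

private lemma hasDerivAt_logcosh (c x : ℝ) :
    HasDerivAt (fun x => Real.log (Real.cosh (x - c))) (Real.tanh (x - c)) x := by
  have h1 : HasDerivAt (fun x : ℝ => x - c) 1 x := (hasDerivAt_id x).sub_const c
  have h2 : HasDerivAt (fun x : ℝ => Real.cosh (x - c)) (Real.sinh (x - c)) x := by
    simpa [Function.comp_def] using (Real.hasDerivAt_cosh (x - c)).comp x h1
  have h3 := h2.log (ne_of_gt (Real.cosh_pos _))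
  simpa [Real.tanh_eq_sinh_div_cosh] using h3

private lemma diff_hasDerivAt (c a x : ℝ) :
    HasDerivAt (fun x => Real.log (Real.cosh (x - c)) - Real.log (Real.cosh (x - a)))
      (Real.tanh (x - c) - Real.tanh (x - a)) x :=
  (hasDerivAt_logcosh c x).sub (hasDerivAt_logcosh a x)

private lemma diff_mono {c a : ℝ} (h : c ≤ a) :
    Monotone (fun x => Real.log (Real.cosh (x - c)) - Real.log (Real.cosh (x - a))) := by
  apply monotone_of_deriv_nonneg
  · exact fun x => ((diff_hasDerivAt c a x).differentiableAt)
  · intro x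
    rw [(diff_hasDerivAt c a x).deriv]
    have : x - a ≤ x - c := by linarith
    simpa using sub_nonneg.mpr (tanh_strictMono.monotone this)

private lemma diff_strictMono {c a : ℝ} (h : c < a) :
    StrictMono (fun x => Real.log (Real.cosh (x - c)) - Real.log (Real.cosh (x - a))) := by
  apply strictMono_of_deriv_pos
  intro x
  rw [(diff_hasDerivAt c a x).deriv]
  have : x - a < x - c := by linarith
  simpa using sub_pos.mpr (tanh_strictMono this)

private def pieceSet {N : ℕ} (u : Fin N → ℝ) (m : Fin (N + 1)) : Set ℝ :=
  {x : ℝ | ∀ k : Fin N, ((k : ℕ) < (m : ℕ) → u k ≤ x) ∧ ((m : ℕ) ≤ (k : ℕ) → x ≤ u k)}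

private lemma breakpoint_mem_left {N : ℕ} {u : Fin N → ℝ} (hu : StrictMono u)
    (k : Fin N) (m : Fin (N + 1)) (hm : (m : ℕ) = (k : ℕ)) : u k ∈ pieceSet u m := by
  intro k'
  constructor
  · intro h
    exact hu.monotone (by rw [Fin.le_def]; omega)
  · intro h
    exact hu.monotone (by rw [Fin.le_def]; omega)

private lemma breakpoint_mem_right {N : ℕ} {u : Fin N → ℝ} (hu : StrictMono u)
    (k : Fin N) (m : Fin (N + 1)) (hm : (m : ℕ) = (k : ℕ) + 1) : u k ∈ pieceSet u m := by
  intro k'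
  constructor
  · intro h
    exact hu.monotone (by rw [Fin.le_def]; omega)
  · intro h
    exact hu.monotone (by rw [Fin.le_def]; omega)

private noncomputable def pieceIdx {N : ℕ} (u : Fin N → ℝ) (x : ℝ) : Fin (N + 1) :=
  ⟨(Finset.univ.filter (fun k => u k ≤ x)).card,
    Nat.lt_succ_of_le (le_trans (Finset.card_filter_le _ _) (by simp))⟩

private lemma mem_pieceIdx {N : ℕ} {u : Fin N → ℝ} (hu : StrictMono u) (x : ℝ) :
    x ∈ pieceSet u (pieceIdx u x) := by
  intro k
  constructor
  · intro hk
    by_contra hx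
    push_neg at hx
    have hsub : (Finset.univ.filter (fun k' => u k' ≤ x)) ⊆ Finset.Iio k := by
      intro k' hk'
      rw [Finset.mem_Iio]
      exact hu.lt_iff_lt.mp (lt_of_le_of_lt (Finset.mem_filter.mp hk').2 hx)
    have := Finset.card_le_card hsub
    rw [Fin.card_Iio] at this
    simp only [pieceIdx] at hk
    omega
  · intro hk
    by_contra hx
    push_neg at hx
    have hsub : Finset.Iic k ⊆ (Finset.univ.filter (fun k' => u k' ≤ x)) := by
      intro k' hk'
      refine Finset.mem_filter.mpr ⟨Finset.mem_univ _, ?_⟩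
      exact le_trans (hu.monotone (Finset.mem_Iic.mp hk')) (le_of_lt hx)
    have := Finset.card_le_card hsub
    rw [Fin.card_Iic] at this
    simp only [pieceIdx] at hk
    omega

private lemma pieceIdx_mono {N : ℕ} (u : Fin N → ℝ) {x y : ℝ} (hxy : x ≤ y) :
    pieceIdx u x ≤ pieceIdx u y := by
  rw [Fin.le_def]
  simp only [pieceIdx]
  refine Finset.card_le_card (fun k hk => ?_)
  rw [Finset.mem_filter] at hk ⊢
  exact ⟨hk.1, le_trans hk.2 hxy⟩

private lemma glue_mono {N : ℕ} {u : Fin N → ℝ} (hu : StrictMono u) (H : ℝ → ℝ)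
    (S : Fin (N + 1) → Prop) (hS : ∀ m, S m → MonotoneOn H (pieceSet u m)) :
    ∀ (n : ℕ) (m1 m2 : Fin (N + 1)), ((m2 : ℕ) - (m1 : ℕ)) = n → m1 ≤ m2 →
      (∀ m, m1 ≤ m → m ≤ m2 → S m) →
      ∀ x ∈ pieceSet u m1, ∀ y ∈ pieceSet u m2, x ≤ y → H x ≤ H y := by
  intro n
  induction n with
  | zero =>
    intro m1 m2 hd hle hSall x hx y hy hxy
    have hm : m1 = m2 := by
      rw [Fin.le_def] at hle; exact Fin.ext (by omega)
    subst hm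
    exact hS m1 (hSall m1 le_rfl le_rfl) hx hy hxy
  | succ n ih =>
    intro m1 m2 hd hle hSall x hx y hy hxy
    have hlt : (m1 : ℕ) < (m2 : ℕ) := by omega
    have hkN : (m1 : ℕ) < N := by have := m2.isLt; omega
    set k : Fin N := ⟨(m1 : ℕ), hkN⟩ with hk
    have hkv : (k : ℕ) = (m1 : ℕ) := rfl
    have hxu : x ≤ u k := (hx k).2 (le_refl _)
    have huy : u k ≤ y := (hy k).1 hlt
    have hu1 : u k ∈ pieceSet u m1 := breakpoint_mem_left hu k m1 rfl
    have hu2 : u k ∈ pieceSet u k.succ := breakpoint_mem_right hu k k.succ (by simp)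
    have step1 : H x ≤ H (u k) := hS m1 (hSall m1 le_rfl hle) hx hu1 hxu
    have step2 : H (u k) ≤ H y := by
      refine ih k.succ m2 (by simp only [Fin.val_succ]; omega)
        (by rw [Fin.le_def]; simp only [Fin.val_succ]; omega)
        (fun m h1 h2 => hSall m (le_trans (by rw [Fin.le_def]; simp only [Fin.val_succ]; omega) h1) h2)
        (u k) hu2 y hy huy
    exact le_trans step1 step2

private lemma glue_smono {N : ℕ} {u : Fin N → ℝ} (hu : StrictMono u) (H : ℝ → ℝ)
    (S : Fin (N + 1) → Prop) (hS : ∀ m, S m → StrictMonoOn H (pieceSet u m)) :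
    ∀ (n : ℕ) (m1 m2 : Fin (N + 1)), ((m2 : ℕ) - (m1 : ℕ)) = n → m1 ≤ m2 →
      (∀ m, m1 ≤ m → m ≤ m2 → S m) →
      ∀ x ∈ pieceSet u m1, ∀ y ∈ pieceSet u m2, x < y → H x < H y := by
  intro n
  induction n with
  | zero =>
    intro m1 m2 hd hle hSall x hx y hy hxy
    have hm : m1 = m2 := by
      rw [Fin.le_def] at hle; exact Fin.ext (by omega)
    subst hm
    exact hS m1 (hSall m1 le_rfl le_rfl) hx hy hxy
  | succ n ih =>
    intro m1 m2 hd hle hSall x hx y hy hxy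
    have hlt : (m1 : ℕ) < (m2 : ℕ) := by omega
    have hkN : (m1 : ℕ) < N := by have := m2.isLt; omega
    set k : Fin N := ⟨(m1 : ℕ), hkN⟩ with hk
    have hkv : (k : ℕ) = (m1 : ℕ) := rfl
    have hxu : x ≤ u k := (hx k).2 (le_refl _)
    have huy : u k ≤ y := (hy k).1 hlt
    have hu1 : u k ∈ pieceSet u m1 := breakpoint_mem_left hu k m1 rfl
    have hu2 : u k ∈ pieceSet u k.succ := breakpoint_mem_right hu k k.succ (by simp)
    rcases eq_or_lt_of_le hxu with heq | hxlt
    · have hky : u k < y := heq ▸ hxy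
      have hres := ih k.succ m2 (by simp only [Fin.val_succ]; omega)
        (by rw [Fin.le_def]; simp only [Fin.val_succ]; omega)
        (fun m h1 h2 => hSall m (le_trans (by rw [Fin.le_def]; simp only [Fin.val_succ]; omega) h1) h2)
        (u k) hu2 y hy hky
      rw [heq]
      exact hres
    · have step1 : H x < H (u k) := hS m1 (hSall m1 le_rfl hle) hx hu1 hxlt
      have step2 : H (u k) ≤ H y :=
        glue_mono hu H S (fun m hm => (hS m hm).monotoneOn) n k.succ m2
          (by simp only [Fin.val_succ]; omega)
          (by rw [Fin.le_def]; simp only [Fin.val_succ]; omega)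
          (fun m h1 h2 => hSall m (le_trans (by rw [Fin.le_def]; simp only [Fin.val_succ]; omega) h1) h2)
          (u k) hu2 y hy huy
      exact lt_of_lt_of_le step1 step2

/-- Let `f` be a Q-concave piecewise distance-like function on `ℝ` (pieces
`x ↦ log cosh (x − c m) + d m` on the intervals determined by breakpoints `u`), and let
`g x = log cosh (x − a) + b` be distance-like.  Then `f − g` is Q-concave (left derivatives
≥ right derivatives at breakpoints) and monotone on each piece; moreover if `f − g` vanishes
at `i < j`, then `f − g ≥ 0` on `[i, j]` and `f − g ≤ 0` outside of `[i, j]`. -/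
theorem pd_minus_distanceLike (N : ℕ) (u : Fin N → ℝ) (hu : StrictMono u)
    (c d : Fin (N + 1) → ℝ) (f : ℝ → ℝ) (hf : Continuous f)
    (hpiece : ∀ (m : Fin (N + 1)) (x : ℝ),
      (∀ k : Fin N, ((k : ℕ) < (m : ℕ) → u k ≤ x) ∧ ((m : ℕ) ≤ (k : ℕ) → x ≤ u k)) →
      f x = Real.log (Real.cosh (x - c m)) + d m)
    (hQ : ∀ k : Fin N, Real.tanh (u k - c k.succ) ≤ Real.tanh (u k - c k.castSucc))
    (a b : ℝ) :
    (∀ k : Fin N,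
      Real.tanh (u k - c k.succ) - Real.tanh (u k - a) ≤
        Real.tanh (u k - c k.castSucc) - Real.tanh (u k - a)) ∧
    (∀ m : Fin (N + 1),
      MonotoneOn (fun x => f x - (Real.log (Real.cosh (x - a)) + b))
        {x : ℝ | ∀ k : Fin N, ((k : ℕ) < (m : ℕ) → u k ≤ x) ∧ ((m : ℕ) ≤ (k : ℕ) → x ≤ u k)} ∨
      AntitoneOn (fun x => f x - (Real.log (Real.cosh (x - a)) + b))
        {x : ℝ | ∀ k : Fin N, ((k : ℕ) < (m : ℕ) → u k ≤ x) ∧ ((m : ℕ) ≤ (k : ℕ) → x ≤ u k)}) ∧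
    (∀ i j : ℝ, i < j →
      f i - (Real.log (Real.cosh (i - a)) + b) = 0 →
      f j - (Real.log (Real.cosh (j - a)) + b) = 0 →
      (∀ x ∈ Set.Icc i j, 0 ≤ f x - (Real.log (Real.cosh (x - a)) + b)) ∧
      (∀ x : ℝ, x ∉ Set.Icc i j → f x - (Real.log (Real.cosh (x - a)) + b) ≤ 0)) := by
  set h : ℝ → ℝ := fun x => f x - (Real.log (Real.cosh (x - a)) + b) with hh
  -- values of h on pieces
  have hform : ∀ m : Fin (N + 1), ∀ x ∈ pieceSet u m,
      h x = (Real.log (Real.cosh (x - c m)) - Real.log (Real.cosh (x - a))) + (d m - b) := by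
    intro m x hx
    simp only [hh]
    rw [hpiece m x hx]
    ring
  -- c is monotone
  have hcmono : Monotone c := by
    refine Fin.monotone_iff_le_succ.mpr (fun k => ?_)
    have h1 := hQ k
    have h2 := tanh_strictMono.le_iff_le.mp h1
    linarith
  -- piece monotonicity
  have pieceMono : ∀ m : Fin (N + 1), c m ≤ a → MonotoneOn h (pieceSet u m) := by
    intro m hm x hx y hy hxy
    rw [hform m x hx, hform m y hy]
    have h2 : Real.log (Real.cosh (x - c m)) - Real.log (Real.cosh (x - a)) ≤
        Real.log (Real.cosh (y - c m)) - Real.log (Real.cosh (y - a)) := diff_mono hm hxy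
    linarith
  have pieceSMono : ∀ m : Fin (N + 1), c m < a → StrictMonoOn h (pieceSet u m) := by
    intro m hm x hx y hy hxy
    rw [hform m x hx, hform m y hy]
    have h2 : Real.log (Real.cosh (x - c m)) - Real.log (Real.cosh (x - a)) <
        Real.log (Real.cosh (y - c m)) - Real.log (Real.cosh (y - a)) := diff_strictMono hm hxy
    linarith
  have pieceAnti : ∀ m : Fin (N + 1), a ≤ c m → AntitoneOn h (pieceSet u m) := by
    intro m hm x hx y hy hxy
    rw [hform m x hx, hform m y hy]
    have h2 : Real.log (Real.cosh (x - a)) - Real.log (Real.cosh (x - c m)) ≤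
        Real.log (Real.cosh (y - a)) - Real.log (Real.cosh (y - c m)) := diff_mono hm hxy
    linarith
  have pieceSAnti : ∀ m : Fin (N + 1), a < c m → StrictAntiOn h (pieceSet u m) := by
    intro m hm x hx y hy hxy
    rw [hform m x hx, hform m y hy]
    have h2 : Real.log (Real.cosh (x - a)) - Real.log (Real.cosh (x - c m)) <
        Real.log (Real.cosh (y - a)) - Real.log (Real.cosh (y - c m)) := diff_strictMono hm hxy
    linarith
  -- glue wrappers
  have Gmono : ∀ m1 m2 : Fin (N + 1), m1 ≤ m2 → (∀ m, m1 ≤ m → m ≤ m2 → c m ≤ a) →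
      ∀ x ∈ pieceSet u m1, ∀ y ∈ pieceSet u m2, x ≤ y → h x ≤ h y :=
    fun m1 m2 hle hall =>
      glue_mono hu h (fun m => c m ≤ a) pieceMono _ m1 m2 rfl hle hall
  have Ganti : ∀ m1 m2 : Fin (N + 1), m1 ≤ m2 → (∀ m, m1 ≤ m → m ≤ m2 → a ≤ c m) →
      ∀ x ∈ pieceSet u m1, ∀ y ∈ pieceSet u m2, x ≤ y → h y ≤ h x := by
    intro m1 m2 hle hall x hx y hy hxy
    have := glue_mono hu (fun x => -(h x)) (fun m => a ≤ c m)
      (fun m hm x hx y hy hxy => neg_le_neg (pieceAnti m hm hx hy hxy))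
      _ m1 m2 rfl hle hall x hx y hy hxy
    simpa using this
  have GSmono : ∀ m1 m2 : Fin (N + 1), m1 ≤ m2 → (∀ m, m1 ≤ m → m ≤ m2 → c m < a) →
      ∀ x ∈ pieceSet u m1, ∀ y ∈ pieceSet u m2, x < y → h x < h y :=
    fun m1 m2 hle hall =>
      glue_smono hu h (fun m => c m < a) pieceSMono _ m1 m2 rfl hle hall
  have GSanti : ∀ m1 m2 : Fin (N + 1), m1 ≤ m2 → (∀ m, m1 ≤ m → m ≤ m2 → a < c m) →
      ∀ x ∈ pieceSet u m1, ∀ y ∈ pieceSet u m2, x < y → h y < h x := by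
    intro m1 m2 hle hall x hx y hy hxy
    have := glue_smono hu (fun x => -(h x)) (fun m => a < c m)
      (fun m hm x hx y hy hxy => neg_lt_neg (pieceSAnti m hm hx hy hxy))
      _ m1 m2 rfl hle hall x hx y hy hxy
    simpa using this
  -- key lemmas
  have K1 : ∀ p q : ℝ, p < q → h q < h p → ∀ r : ℝ, q < r → h r < h q := by
    intro p q hpq hval r hqr
    have hmpq : pieceIdx u p ≤ pieceIdx u q := pieceIdx_mono u hpq.le
    have hmqr : pieceIdx u q ≤ pieceIdx u r := pieceIdx_mono u hqr.le
    have hex : ∃ m, pieceIdx u p ≤ m ∧ m ≤ pieceIdx u q ∧ a < c m := by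
      by_contra hcon
      push_neg at hcon
      have := Gmono (pieceIdx u p) (pieceIdx u q) hmpq
        (fun m h1 h2 => hcon m h1 h2) p (mem_pieceIdx hu p) q (mem_pieceIdx hu q) hpq.le
      linarith
    obtain ⟨m0, h1, h2, h3⟩ := hex
    exact GSanti (pieceIdx u q) (pieceIdx u r) hmqr
      (fun m hm1 hm2 => lt_of_lt_of_le h3 (hcmono (le_trans h2 hm1)))
      q (mem_pieceIdx hu q) r (mem_pieceIdx hu r) hqr
  have K2 : ∀ q r : ℝ, q < r → h q < h r → ∀ p : ℝ, p < q → h p < h q := by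
    intro q r hqr hval p hpq
    have hmpq : pieceIdx u p ≤ pieceIdx u q := pieceIdx_mono u hpq.le
    have hmqr : pieceIdx u q ≤ pieceIdx u r := pieceIdx_mono u hqr.le
    have hex : ∃ m, pieceIdx u q ≤ m ∧ m ≤ pieceIdx u r ∧ c m < a := by
      by_contra hcon
      push_neg at hcon
      have := Ganti (pieceIdx u q) (pieceIdx u r) hmqr
        (fun m h1 h2 => hcon m h1 h2) q (mem_pieceIdx hu q) r (mem_pieceIdx hu r) hqr.le
      linarith
    obtain ⟨m0, h1, h2, h3⟩ := hex
    exact GSmono (pieceIdx u p) (pieceIdx u q) hmpq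
      (fun m hm1 hm2 => lt_of_le_of_lt (hcmono (le_trans hm2 h1)) h3)
      p (mem_pieceIdx hu p) q (mem_pieceIdx hu q) hpq
  refine ⟨fun k => sub_le_sub_right (hQ k) _, ?_, ?_⟩
  · intro m
    rcases le_total (c m) a with hm | hm
    · exact Or.inl (pieceMono m hm)
    · exact Or.inr (pieceAnti m hm)
  · intro i j hij hi hj
    have hi' : h i = 0 := hi
    have hj' : h j = 0 := hj
    constructor
    · rintro x ⟨hxi, hxj⟩
      rcases eq_or_lt_of_le hxi with rfl | hxi'
      · exact le_of_eq hi.symm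
      rcases eq_or_lt_of_le hxj with rfl | hxj'
      · exact le_of_eq hj.symm
      by_contra hneg
      push_neg at hneg
      have hx0 : h x < h i := by rw [hi']; exact hneg
      have := K1 i x hxi' hx0 j hxj'
      rw [hj'] at this
      linarith
    · intro x hx
      rw [Set.mem_Icc] at hx
      push_neg at hx
      by_contra hneg
      push_neg at hneg
      rcases lt_or_ge x i with hxi | hxi
      · have hx0 : h i < h x := by rw [hi']; exact hneg
        have := K1 x i hxi hx0 j hij
        rw [hj', hi'] at this
        linarith
      · have hxj : j < x := hx hxi
        have hx0 : h j < h x := by rw [hj']; exact hneg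
        have := K2 j x hxj hx0 i hij
        rw [hi', hj'] at this
        linarith
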